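/- Let G be a finite non-nilpotent group. Then the intersection of the normalizers of all non-normal Sylow subgroups of G is a nilpotent normal subgroup of G. -/

import Mathlib

open scoped Pointwise

theorem stmt1 {G : Type*} [Group G] [Fintype G] (hG : ¬ Group.IsNilpotent G) :
    Group.IsNilpotent
      ↥(sInf {H : Subgroup G | ∃ (p : ℕ), p.Prime ∧ ∃ P : Sylow p G,
          ¬ (P : Subgroup G).Normal ∧ H = Subgroup.normalizer ((P : Subgroup G) : Set G)}) ∧
    (sInf {H : Subgroup G | ∃ (p : ℕ), p.Prime ∧ ∃ P : Sylow p G,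
          ¬ (P : Subgroup G).Normal ∧ H = Subgroup.normalizer ((P : Subgroup G) : Set G)}).Normal := by
  set S : Set (Subgroup G) := {H : Subgroup G | ∃ (p : ℕ), p.Prime ∧ ∃ P : Sylow p G,
      ¬ (P : Subgroup G).Normal ∧ H = Subgroup.normalizer ((P : Subgroup G) : Set G)} with hS
  set D : Subgroup G := sInf S with hD
  -- D normalizes every Sylow subgroup of G
  have key : ∀ (p : ℕ), p.Prime → ∀ (P : Sylow p G), D ≤ Subgroup.normalizer ((P : Subgroup G) : Set G) := by
    intro p hp P
    by_cases h : (P : Subgroup G).Normal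
    · rw [Subgroup.normalizer_eq_top_iff.mpr h]; exact le_top
    · exact sInf_le ⟨p, hp, P, h, rfl⟩
  constructor
  · -- nilpotent: every Sylow of D is normal in D
    haveI : Fintype ↥D := Fintype.ofFinite _
    refine ((isNilpotent_of_finite_tfae (G := ↥D)).out 3 0).mp ?_
    intro p hp Q
    obtain ⟨P, hP⟩ := Q.exists_comap_subtype_eq
    constructor
    intro x hx g
    have hQ : ∀ y : ↥D, y ∈ (Q : Subgroup ↥D) ↔ (y : G) ∈ (P : Subgroup G) := by
      intro y; rw [← hP]; exact Iff.rfl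
    rw [hQ] at hx ⊢
    have hg : (g : G) ∈ Subgroup.normalizer ((P : Subgroup G) : Set G) := key p hp.out P g.2
    have := (Subgroup.mem_normalizer_iff.mp hg (x : G)).mp hx
    simpa using this
  · -- normal
    constructor
    intro n hn g
    rw [Subgroup.mem_sInf] at hn ⊢
    rintro H ⟨p, hp, P, hPn, rfl⟩
    have hp' : Fact p.Prime := ⟨hp⟩
    set P' : Sylow p G := g⁻¹ • P with hP'
    have hmem : ∀ y : G, y ∈ (P' : Subgroup G) ↔ g * y * g⁻¹ ∈ (P : Subgroup G) := by
      intro y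
      rw [hP', Sylow.coe_subgroup_smul, Subgroup.mem_pointwise_smul_iff_inv_smul_mem]
      simp [MulAut.smul_def, mul_assoc]
    have hP'n : ¬ (P' : Subgroup G).Normal := by
      intro hnor
      apply hPn
      constructor
      intro x hx c
      have e0 : g * (g⁻¹ * x * g) * g⁻¹ = x := by group
      have hx' : g⁻¹ * x * g ∈ (P' : Subgroup G) := (hmem _).mpr (by rw [e0]; exact hx)
      have h1 := hnor.conj_mem _ hx' (g⁻¹ * c * g)
      have h2 := (hmem _).mp h1
      have e1 : g * (g⁻¹ * c * g * (g⁻¹ * x * g) * (g⁻¹ * c * g)⁻¹) * g⁻¹ = c * x * c⁻¹ := by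
        group
      rwa [e1] at h2
    have hnP' : n ∈ Subgroup.normalizer ((P' : Subgroup G) : Set G) := hn _ ⟨p, hp, P', hP'n, rfl⟩
    rw [Subgroup.mem_normalizer_iff] at hnP' ⊢
    intro h
    have e1 : g * (g⁻¹ * h * g) * g⁻¹ = h := by group
    have e2 : g * (n * (g⁻¹ * h * g) * n⁻¹) * g⁻¹ = g * n * g⁻¹ * h * (g * n * g⁻¹)⁻¹ := by
      group
    constructor
    · intro hh
      have t1 : g⁻¹ * h * g ∈ (P' : Subgroup G) := (hmem _).mpr (by rw [e1]; exact hh)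
      have t2 := (hmem _).mp ((hnP' _).mp t1)
      rwa [e2] at t2
    · intro hh
      have t1 : n * (g⁻¹ * h * g) * n⁻¹ ∈ (P' : Subgroup G) :=
        (hmem _).mpr (by rw [e2]; exact hh)
      have t2 := (hmem _).mp ((hnP' _).mpr t1)
      rwa [e1] at t2
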